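/- For 1 ≤ p ≤ ∞ and every convex subset C of ℓ_pⁿ containing 0, there exists a linear extension operator E : Lip₀(C) → Lip₀(ℓ_pⁿ) with ‖E‖ ≤ n^{|1/p - 1/2|}. In other words, λ_conv(ℓ_pⁿ) ≤ n^{|1/p - 1/2|}. -/

import Mathlib

open Filter Topology
open scoped ENNReal

namespace Stmt9
noncomputable section


lemma single_rpow_le_sum {n : ℕ} (f : Fin n → NNReal) (a : ℝ) (i : Fin n) :
    f i ^ a ≤ ∑ j, f j ^ a :=
  Finset.single_le_sum (f := fun j => f j ^ a) (fun j _ => zero_le) (Finset.mem_univ i)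

lemma rpow_one_div (x : NNReal) {a : ℝ} (ha : a ≠ 0) : (x ^ a) ^ (1/a) = x := by
  rw [← NNReal.rpow_mul, mul_one_div_cancel ha, NNReal.rpow_one]

lemma le_S {n : ℕ} (f : Fin n → NNReal) {a : ℝ} (ha : 0 < a) (i : Fin n) :
    f i ≤ (∑ j, f j ^ a) ^ (1/a) := by
  calc f i = (f i ^ a) ^ (1/a) := (rpow_one_div _ ha.ne').symm
    _ ≤ _ := NNReal.rpow_le_rpow (single_rpow_le_sum f a i) (by positivity)

-- L1
lemma sum_rpow_le_of_le {n : ℕ} (f : Fin n → NNReal) {a b : ℝ} (ha : 0 < a) (hab : a ≤ b) :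
    (∑ i, f i ^ b) ^ (1/b) ≤ (∑ i, f i ^ a) ^ (1/a) := by
  have hb : 0 < b := lt_of_lt_of_le ha hab
  set S : NNReal := (∑ i, f i ^ a) ^ (1/a) with hS
  have hSa : S ^ a = ∑ i, f i ^ a := by
    rw [hS, ← NNReal.rpow_mul, one_div_mul_cancel ha.ne', NNReal.rpow_one]
  have key : ∑ i, f i ^ b ≤ S ^ b := by
    have hb' : b = a + (b - a) := by ring
    calc ∑ i, f i ^ b = ∑ i, f i ^ a * f i ^ (b - a) := by
          refine Finset.sum_congr rfl fun i _ => ?_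
          rw [hb', NNReal.rpow_add' (by rw [← hb']; exact hb.ne') (f i)]
          ring_nf
      _ ≤ ∑ i, f i ^ a * S ^ (b - a) :=
          Finset.sum_le_sum fun i _ =>
            mul_le_mul_right (NNReal.rpow_le_rpow (le_S f ha i) (by linarith)) _
      _ = (∑ i, f i ^ a) * S ^ (b - a) := by rw [← Finset.sum_mul]
      _ = S ^ a * S ^ (b - a) := by rw [hSa]
      _ = S ^ b := by rw [hb', NNReal.rpow_add' (by rw [← hb']; exact hb.ne') S]; ring_nf
  calc (∑ i, f i ^ b) ^ (1/b) ≤ (S ^ b) ^ (1/b) := NNReal.rpow_le_rpow key (by positivity)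
    _ = S := rpow_one_div _ hb.ne'

-- L2
lemma sum_rpow_le_card_mul {n : ℕ} (f : Fin n → NNReal) {a b : ℝ} (ha : 0 < a) (hab : a ≤ b) :
    (∑ i, f i ^ a) ^ (1/a) ≤ (n : NNReal) ^ (1/a - 1/b) * (∑ i, f i ^ b) ^ (1/b) := by
  have hb : 0 < b := lt_of_lt_of_le ha hab
  rcases Nat.eq_zero_or_pos n with rfl | hn
  · simp only [Finset.univ_eq_empty, Finset.sum_empty]
    rw [NNReal.zero_rpow (by positivity : (1:ℝ)/a ≠ 0)]
    exact zero_le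
  have hn' : (n : NNReal) ≠ 0 := by positivity
  have hr : 1 ≤ b / a := (one_le_div ha).2 hab
  have H := NNReal.rpow_arith_mean_le_arith_mean_rpow Finset.univ
      (fun _ : Fin n => (n : NNReal)⁻¹) (fun i => f i ^ a)
      (by simp [Finset.sum_const, Finset.card_univ]; field_simp) hr
  have h1 : (∑ i, (n:NNReal)⁻¹ * f i ^ a) = (n:NNReal)⁻¹ * ∑ i, f i ^ a := by
    rw [Finset.mul_sum]
  have h2 : (∑ i : Fin n, (n:NNReal)⁻¹ * (f i ^ a) ^ (b/a)) = (n:NNReal)⁻¹ * ∑ i, f i ^ b := by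
    rw [Finset.mul_sum]
    refine Finset.sum_congr rfl fun i _ => ?_
    rw [← NNReal.rpow_mul]
    congr 2
    field_simp
  rw [h1, h2, NNReal.mul_rpow] at H
  have key : (∑ i, f i ^ a) ^ (b/a) ≤ (n : NNReal) ^ (b/a - 1) * ∑ i, f i ^ b := by
    have H2 := mul_le_mul_right H ((n : NNReal) ^ (b/a))
    rw [← mul_assoc, ← NNReal.mul_rpow, mul_inv_cancel₀ hn', NNReal.one_rpow, one_mul] at H2
    calc (∑ i, f i ^ a) ^ (b/a) ≤ (n : NNReal) ^ (b/a) * ((n:NNReal)⁻¹ * ∑ i, f i ^ b) := H2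
      _ = (n : NNReal) ^ (b/a - 1) * ∑ i, f i ^ b := by
          rw [← mul_assoc]
          congr 1
          have hinv : (n:NNReal)⁻¹ = (n:NNReal) ^ (-1 : ℝ) := by
            rw [NNReal.rpow_neg, NNReal.rpow_one]
          rw [hinv, ← NNReal.rpow_add hn']
          ring_nf
  have H3 := NNReal.rpow_le_rpow key (by positivity : (0:ℝ) ≤ 1/b)
  rw [← NNReal.rpow_mul, NNReal.mul_rpow, ← NNReal.rpow_mul] at H3
  have e1 : b/a * (1/b) = 1/a := by field_simp
  have e2 : (b/a - 1) * (1/b) = 1/a - 1/b := by field_simp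
  rwa [e1, e2] at H3

-- L3
lemma iSup_le_sum_rpow {n : ℕ} (f : Fin n → NNReal) {a : ℝ} (ha : 0 < a) :
    (⨆ i, f i) ≤ (∑ i, f i ^ a) ^ (1/a) := by
  rcases Nat.eq_zero_or_pos n with rfl | hn
  · simp [ciSup_of_empty]
  haveI : Nonempty (Fin n) := ⟨⟨0, hn⟩⟩
  exact ciSup_le fun i => le_S f ha i

-- L4
lemma sum_rpow_le_card_mul_iSup {n : ℕ} (f : Fin n → NNReal) {a : ℝ} (ha : 0 < a) :
    (∑ i, f i ^ a) ^ (1/a) ≤ (n : NNReal) ^ (1/a) * ⨆ i, f i := by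
  have hM : ∀ i, f i ≤ ⨆ j, f j := fun i => le_ciSup (Set.Finite.bddAbove (Set.finite_range f)) i
  have key : ∑ i, f i ^ a ≤ (n : NNReal) * (⨆ j, f j) ^ a := by
    calc ∑ i, f i ^ a ≤ ∑ _i : Fin n, (⨆ j, f j) ^ a :=
          Finset.sum_le_sum fun i _ => NNReal.rpow_le_rpow (hM i) ha.le
      _ = (n : NNReal) * (⨆ j, f j) ^ a := by simp [Finset.sum_const, mul_comm]
  calc (∑ i, f i ^ a) ^ (1/a) ≤ ((n : NNReal) * (⨆ j, f j) ^ a) ^ (1/a) :=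
        NNReal.rpow_le_rpow key (by positivity)
    _ = (n : NNReal) ^ (1/a) * ⨆ j, f j := by
        rw [NNReal.mul_rpow, rpow_one_div _ ha.ne']

noncomputable def toE2 {n : ℕ} (p : ℝ≥0∞) (x : PiLp p fun _ : Fin n => ℝ) :
    EuclideanSpace ℝ (Fin n) :=
  (WithLp.equiv 2 (Fin n → ℝ)).symm (WithLp.equiv p (Fin n → ℝ) x)

lemma nndist_coord {n : ℕ} (p : ℝ≥0∞) (x y : PiLp p fun _ : Fin n => ℝ) (i : Fin n) :
    nndist (toE2 p x i) (toE2 p y i) = nndist (x i) (y i) := rfl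

lemma nndist_two_eq {n : ℕ} (x y : EuclideanSpace ℝ (Fin n)) :
    nndist x y = (∑ i, nndist (x i) (y i) ^ (2:ℝ)) ^ (1/(2:ℝ)) := by
  rw [PiLp.nndist_eq_sum (by norm_num : (2:ℝ≥0∞) ≠ ⊤)]
  norm_num [ENNReal.toReal_ofNat]


lemma dist_p_le {n : ℕ} (p : ℝ≥0∞) [Fact (1 ≤ p)] (x y : PiLp p fun _ : Fin n => ℝ) :
    nndist x y ≤ (n : NNReal) ^ (max (1/p.toReal - 1/2) 0) * nndist (toE2 p x) (toE2 p y) := by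
  set f : Fin n → NNReal := fun i => nndist (x i) (y i) with hf
  have h2 : nndist (toE2 p x) (toE2 p y) = (∑ i, f i ^ (2:ℝ)) ^ (1/(2:ℝ)) := nndist_two_eq _ _
  rw [h2]
  rcases p.dichotomy with rfl | h
  · have hmax : max (1/(⊤:ℝ≥0∞).toReal - 1/2) 0 = 0 := by
      simp [ENNReal.toReal_top]
    rw [hmax, NNReal.rpow_zero, one_mul, PiLp.nndist_eq_iSup]
    exact iSup_le_sum_rpow f (by norm_num)
  · have ha : 0 < p.toReal := by linarith
    have hpt : p ≠ ⊤ := fun hp => by rw [hp, ENNReal.toReal_top] at h; linarith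
    have h1 : nndist x y = (∑ i, f i ^ p.toReal) ^ (1/p.toReal) := PiLp.nndist_eq_sum hpt x y
    rw [h1]
    rcases le_total p.toReal 2 with hc | hc
    · rw [max_eq_left (by have := one_div_le_one_div_of_le ha hc; linarith)]
      exact sum_rpow_le_card_mul f ha hc
    · rw [max_eq_right (by have := one_div_le_one_div_of_le (by norm_num : (0:ℝ) < 2) hc; linarith),
        NNReal.rpow_zero, one_mul]
      exact sum_rpow_le_of_le f (by norm_num) hc

lemma dist_2_le {n : ℕ} (p : ℝ≥0∞) [Fact (1 ≤ p)] (x y : PiLp p fun _ : Fin n => ℝ) :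
    nndist (toE2 p x) (toE2 p y) ≤ (n : NNReal) ^ (max (1/2 - 1/p.toReal) 0) * nndist x y := by
  set f : Fin n → NNReal := fun i => nndist (x i) (y i) with hf
  have h2 : nndist (toE2 p x) (toE2 p y) = (∑ i, f i ^ (2:ℝ)) ^ (1/(2:ℝ)) := nndist_two_eq _ _
  rw [h2]
  rcases p.dichotomy with rfl | h
  · have hmax : max (1/(⊤:ℝ≥0∞).toReal - 1/2) 0 = 0 := by
      simp [ENNReal.toReal_top]
    have hmax' : max (1/2 - 1/(⊤:ℝ≥0∞).toReal) 0 = 1/2 := by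
      simp [ENNReal.toReal_top]
    rw [hmax', PiLp.nndist_eq_iSup]
    exact sum_rpow_le_card_mul_iSup f (by norm_num)
  · have ha : 0 < p.toReal := by linarith
    have hpt : p ≠ ⊤ := fun hp => by rw [hp, ENNReal.toReal_top] at h; linarith
    have h1 : nndist x y = (∑ i, f i ^ p.toReal) ^ (1/p.toReal) := PiLp.nndist_eq_sum hpt x y
    rw [h1]
    rcases le_total p.toReal 2 with hc | hc
    · rw [max_eq_right (by have := one_div_le_one_div_of_le ha hc; linarith),
        NNReal.rpow_zero, one_mul]
      exact sum_rpow_le_of_le f ha hc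
    · rw [max_eq_left (by have := one_div_le_one_div_of_le (by norm_num : (0:ℝ) < 2) hc; linarith)]
      exact sum_rpow_le_card_mul f (by norm_num) hc

lemma dist_p_le' {n : ℕ} (p : ℝ≥0∞) [Fact (1 ≤ p)] (x y : PiLp p fun _ : Fin n => ℝ) :
    dist x y ≤ (n : ℝ) ^ (max (1/p.toReal - 1/2) 0) * dist (toE2 p x) (toE2 p y) := by
  have h := dist_p_le p x y
  rw [dist_nndist, dist_nndist]
  exact_mod_cast h

lemma dist_2_le' {n : ℕ} (p : ℝ≥0∞) [Fact (1 ≤ p)] (x y : PiLp p fun _ : Fin n => ℝ) :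
    dist (toE2 p x) (toE2 p y) ≤ (n : ℝ) ^ (max (1/2 - 1/p.toReal) 0) * dist x y := by
  have h := dist_2_le p x y
  rw [dist_nndist, dist_nndist]
  exact_mod_cast h




def convSeqs : Submodule ℝ (ℕ → ℝ) where
  carrier := {u | ∃ l : ℝ, Tendsto u atTop (𝓝 l)}
  add_mem' := fun ⟨l, hl⟩ ⟨m, hm⟩ => ⟨l + m, hl.add hm⟩
  zero_mem' := ⟨0, tendsto_const_nhds⟩
  smul_mem' := fun c _ ⟨l, hl⟩ => ⟨c * l, hl.const_mul c⟩

lemma exists_limit_functional :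
    ∃ L : (ℕ → ℝ) →ₗ[ℝ] ℝ, ∀ (u : ℕ → ℝ) (l : ℝ), Tendsto u atTop (𝓝 l) → L u = l := by
  have hlin : ∀ u : convSeqs, Tendsto (u : ℕ → ℝ) atTop (𝓝 u.2.choose) := fun u => u.2.choose_spec
  let ℓ : convSeqs →ₗ[ℝ] ℝ :=
    { toFun := fun u => u.2.choose
      map_add' := fun u v => by
        exact tendsto_nhds_unique (hlin (u + v)) ((hlin u).add (hlin v))
      map_smul' := fun c u => by
        exact tendsto_nhds_unique (hlin (c • u)) ((hlin u).const_mul c) }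
  obtain ⟨L, hL⟩ := LinearMap.exists_extend ℓ
  refine ⟨L, fun u l hu => ?_⟩
  have hu' : u ∈ convSeqs := ⟨l, hu⟩
  have : L u = ℓ ⟨u, hu'⟩ := by
    have := congrFun (congrArg (fun (g : convSeqs →ₗ[ℝ] ℝ) => (g : convSeqs → ℝ)) hL) ⟨u, hu'⟩
    simpa using this
  rw [this]
  exact tendsto_nhds_unique (hlin ⟨u, hu'⟩) hu

-- projection
variable {F : Type*} [NormedAddCommGroup F] [InnerProductSpace ℝ F]

lemma exists_proj {D : Set F} (hne : D.Nonempty) (hc : IsComplete D) (hconv : Convex ℝ D) :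
    ∃ P : F → F, (∀ u, P u ∈ D) ∧ (∀ u ∈ D, P u = u) ∧
      ∀ u v, dist (P u) (P v) ≤ dist u v := by
  have hex := fun u => exists_norm_eq_iInf_of_complete_convex hne hc hconv u
  choose P hPmem hPmin using hex
  have hbdd : ∀ u : F, BddBelow (Set.range fun w : D => ‖u - (w:F)‖) := fun u =>
    ⟨0, fun _ ⟨_, h⟩ => h ▸ norm_nonneg _⟩
  have hchar : ∀ u, ∀ w ∈ D, inner ℝ (u - P u) (w - P u) ≤ (0:ℝ) := fun u =>
    (norm_eq_iInf_iff_real_inner_le_zero hconv (hPmem u)).1 (hPmin u)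
  refine ⟨P, hPmem, fun u hu => ?_, fun u v => ?_⟩
  · have h1 : ‖u - P u‖ ≤ ‖u - u‖ := by
      rw [hPmin u]
      exact ciInf_le (hbdd u) ⟨u, hu⟩
    rw [sub_self, norm_zero] at h1
    have : u - P u = 0 := norm_le_zero_iff.1 h1
    linear_combination (norm := abel) -this
  · have h1 := hchar u (P v) (hPmem v)
    have h2 := hchar v (P u) (hPmem u)
    have key : ‖P u - P v‖ ^ 2 ≤ inner ℝ (u - v) (P u - P v) := by
      have e1 : inner ℝ (u - v) (P u - P v) - ‖P u - P v‖^2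
          = - inner ℝ (u - P u) (P v - P u) - inner ℝ (v - P v) (P u - P v) := by
        rw [← real_inner_self_eq_norm_sq]
        simp only [inner_sub_left, inner_sub_right]
        ring
      nlinarith [h1, h2]
    have h3 : inner ℝ (u - v) (P u - P v) ≤ ‖u - v‖ * ‖P u - P v‖ := real_inner_le_norm _ _
    rw [dist_eq_norm, dist_eq_norm]
    rcases eq_or_lt_of_le (norm_nonneg (P u - P v)) with hz | hz
    · rw [← hz]; exact norm_nonneg _
    · nlinarith

end
end Stmt9


/-- `λ_conv(ℓ_pⁿ) ≤ n^{|1/p - 1/2|}`: for every convex subset `C ∋ 0` of `ℓ_pⁿ` there is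
a linear extension operator `E : Lip₀(C) → Lip₀(ℓ_pⁿ)` of norm at most
`n^{|1/p - 1/2|}`.  (For `p = ∞` one has `p.toReal = 0` and `1/p.toReal = 0`, so the
exponent is `1/2`, as it should be.) -/
theorem stmt_9 {n : ℕ} (p : ENNReal) [Fact (1 ≤ p)]
    (C : Set (PiLp p fun _ : Fin n => ℝ)) (hconv : Convex ℝ C)
    (h0 : (0 : PiLp p fun _ : Fin n => ℝ) ∈ C) :
    ∃ E : (↥C → ℝ) →ₗ[ℝ] ((PiLp p fun _ : Fin n => ℝ) → ℝ),
      ∀ (f : ↥C → ℝ) (K : NNReal), LipschitzWith K f → f ⟨0, h0⟩ = 0 →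
        (∀ x : ↥C, E f (x : PiLp p fun _ : Fin n => ℝ) = f x) ∧
        E f 0 = 0 ∧
        ∀ x y : PiLp p fun _ : Fin n => ℝ,
          |E f x - E f y| ≤ (K : ℝ) * (n : ℝ) ^ |1 / p.toReal - 1 / 2| * dist x y := by
  classical
  obtain ⟨L, hL⟩ := Stmt9.exists_limit_functional
  set ι : (PiLp p fun _ : Fin n => ℝ) → EuclideanSpace ℝ (Fin n) := Stmt9.toE2 p with hι
  set D : Set (EuclideanSpace ℝ (Fin n)) := closure (ι '' C) with hD
  have hDne : D.Nonempty := ⟨ι 0, subset_closure ⟨0, h0, rfl⟩⟩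
  have hDc : IsComplete D := isClosed_closure.isComplete
  have hιlin : ι = ⇑(((WithLp.linearEquiv 2 ℝ (Fin n → ℝ)).symm.toLinearMap).comp
      ((WithLp.linearEquiv p ℝ (Fin n → ℝ)).toLinearMap)) := rfl
  have hDconv : Convex ℝ D := by
    refine Convex.closure ?_
    rw [hιlin]
    exact hconv.linear_image _
  obtain ⟨P, hPmem, hPfix, hPlip⟩ := Stmt9.exists_proj hDne hDc hDconv
  -- sequences
  have hseq0 : ∀ x : PiLp p fun _ : Fin n => ℝ, ∃ s : ℕ → ↥C,
      Tendsto (fun k => ι ((s k : PiLp p fun _ : Fin n => ℝ))) atTop (𝓝 (P (ι x))) := by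
    intro x
    have hmem : P (ι x) ∈ closure (ι '' C) := hPmem (ι x)
    rw [mem_closure_iff_seq_limit] at hmem
    obtain ⟨s, hsmem, hslim⟩ := hmem
    choose t ht1 ht2 using hsmem
    refine ⟨fun k => ⟨t k, ht1 k⟩, ?_⟩
    have : (fun k => ι (t k)) = s := funext ht2
    rw [show (fun k => ι ((⟨t k, ht1 k⟩ : ↥C) : PiLp p fun _ : Fin n => ℝ)) = s from this]
    exact hslim
  choose seq hseq using hseq0
  -- the operator
  refine ⟨{ toFun := fun f x => L (fun k => f (seq x k))
            map_add' := fun f g => funext fun x => L.map_add _ _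
            map_smul' := fun c f => funext fun x => L.map_smul c _ }, ?_⟩
  intro f K hf hf0
  have ιinv_cont : Continuous fun z : EuclideanSpace ℝ (Fin n) =>
      ((WithLp.equiv p (Fin n → ℝ)).symm ((WithLp.equiv 2 (Fin n → ℝ)) z)
        : PiLp p fun _ : Fin n => ℝ) :=
    (PiLp.continuous_toLp p _).comp (PiLp.continuous_ofLp 2 _)
  have ιinv_unif : UniformContinuous fun z : EuclideanSpace ℝ (Fin n) =>
      ((WithLp.equiv p (Fin n → ℝ)).symm ((WithLp.equiv 2 (Fin n → ℝ)) z)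
        : PiLp p fun _ : Fin n => ℝ) :=
    (PiLp.uniformContinuous_toLp p _).comp (PiLp.uniformContinuous_ofLp 2 _)
  -- extension property
  have hext : ∀ x : ↥C, L (fun k => f (seq (x : PiLp p fun _ : Fin n => ℝ) k)) = f x := by
    intro x
    have hfixx : P (ι (x : PiLp p fun _ : Fin n => ℝ)) = ι (x : PiLp p fun _ : Fin n => ℝ) :=
      hPfix _ (subset_closure ⟨x, x.2, rfl⟩)
    have h1 := hseq (x : PiLp p fun _ : Fin n => ℝ)
    rw [hfixx] at h1
    -- convergence of the underlying points in PiLp p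
    have h2 : Tendsto (fun k => ((seq (x : PiLp p fun _ : Fin n => ℝ) k : ↥C)
        : PiLp p fun _ : Fin n => ℝ)) atTop (𝓝 (x : PiLp p fun _ : Fin n => ℝ)) :=
      (ιinv_cont.tendsto _).comp h1
    have h3 : Tendsto (fun k => seq (x : PiLp p fun _ : Fin n => ℝ) k) atTop (𝓝 x) :=
      tendsto_subtype_rng.2 h2
    have h4 : Tendsto (fun k => f (seq (x : PiLp p fun _ : Fin n => ℝ) k)) atTop (𝓝 (f x)) :=
      (hf.continuous.tendsto _).comp h3
    exact hL _ _ h4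
  refine ⟨fun x => hext x, ?_, ?_⟩
  · have := hext ⟨0, h0⟩
    simpa [hf0] using this
  · intro x y
    rcases Nat.eq_zero_or_pos n with rfl | hn
    · have hxy : x = y := (WithLp.ext_iff _).2 (funext fun i => i.elim0)
      subst hxy
      simp [dist_self]
    -- limits exist
    have hconvlim : ∀ z : PiLp p fun _ : Fin n => ℝ,
        ∃ l : ℝ, Tendsto (fun k => f (seq z k)) atTop (𝓝 l) := by
      intro z
      have c0 : CauchySeq (fun k => ι ((seq z k : ↥C) : PiLp p fun _ : Fin n => ℝ)) :=
        (hseq z).cauchySeq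
      have c1 : CauchySeq (fun k => ((seq z k : ↥C) : PiLp p fun _ : Fin n => ℝ)) :=
        ιinv_unif.comp_cauchySeq c0
      have c2 : CauchySeq (fun k => seq z k) := by
        rw [Metric.cauchySeq_iff] at c1 ⊢
        simpa [Subtype.dist_eq] using c1
      exact cauchySeq_tendsto_of_complete (hf.uniformContinuous.comp_cauchySeq c2)
    obtain ⟨lx, hlx⟩ := hconvlim x
    obtain ⟨ly, hly⟩ := hconvlim y
    have hEx : L (fun k => f (seq x k)) = lx := hL _ _ hlx
    have hEy : L (fun k => f (seq y k)) = ly := hL _ _ hly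
    simp only [LinearMap.coe_mk, AddHom.coe_mk]
    rw [hEx, hEy]
    set e1 : ℝ := max (1/p.toReal - 1/2) 0 with he1
    set e2 : ℝ := max (1/2 - 1/p.toReal) 0 with he2
    have hnpos : (0:ℝ) < (n:ℝ) := by exact_mod_cast hn
    -- pointwise bound
    have hb : ∀ k, |f (seq x k) - f (seq y k)| ≤
        (K:ℝ) * ((n:ℝ) ^ e1 * dist (ι ((seq x k : ↥C) : PiLp p fun _ : Fin n => ℝ))
          (ι ((seq y k : ↥C) : PiLp p fun _ : Fin n => ℝ))) := by
      intro k
      have h1 : |f (seq x k) - f (seq y k)| ≤ (K:ℝ) * dist (seq x k) (seq y k) := by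
        have := hf.dist_le_mul (seq x k) (seq y k)
        rwa [Real.dist_eq] at this
      have h2 : dist (seq x k) (seq y k) = dist ((seq x k : ↥C) : PiLp p fun _ : Fin n => ℝ)
          ((seq y k : ↥C) : PiLp p fun _ : Fin n => ℝ) := Subtype.dist_eq _ _
      have h3 := Stmt9.dist_p_le' p ((seq x k : ↥C) : PiLp p fun _ : Fin n => ℝ)
        ((seq y k : ↥C) : PiLp p fun _ : Fin n => ℝ)
      calc |f (seq x k) - f (seq y k)| ≤ (K:ℝ) * dist (seq x k) (seq y k) := h1
        _ = (K:ℝ) * dist ((seq x k : ↥C) : PiLp p fun _ : Fin n => ℝ)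
              ((seq y k : ↥C) : PiLp p fun _ : Fin n => ℝ) := by rw [h2]
        _ ≤ _ := by
            refine mul_le_mul_of_nonneg_left ?_ (K.coe_nonneg)
            exact h3
    have hlim1 : Tendsto (fun k => |f (seq x k) - f (seq y k)|) atTop (𝓝 |lx - ly|) :=
      (hlx.sub hly).abs
    have hlim2 : Tendsto (fun k => (K:ℝ) * ((n:ℝ) ^ e1 *
        dist (ι ((seq x k : ↥C) : PiLp p fun _ : Fin n => ℝ))
          (ι ((seq y k : ↥C) : PiLp p fun _ : Fin n => ℝ)))) atTop
        (𝓝 ((K:ℝ) * ((n:ℝ) ^ e1 * dist (P (ι x)) (P (ι y))))) := by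
      exact (((hseq x).dist (hseq y)).const_mul _).const_mul _
    have hmain : |lx - ly| ≤ (K:ℝ) * ((n:ℝ) ^ e1 * dist (P (ι x)) (P (ι y))) :=
      le_of_tendsto_of_tendsto' hlim1 hlim2 hb
    have hproj : dist (P (ι x)) (P (ι y)) ≤ dist (ι x) (ι y) := hPlip _ _
    have hback : dist (ι x) (ι y) ≤ (n:ℝ) ^ e2 * dist x y := Stmt9.dist_2_le' p x y
    have hsum : (n:ℝ) ^ e1 * (n:ℝ) ^ e2 = (n:ℝ) ^ |1 / p.toReal - 1 / 2| := by
      rw [← Real.rpow_add hnpos]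
      congr 1
      rw [he1, he2]
      rcases le_total (1/p.toReal) (1/2 : ℝ) with hc | hc
      · rw [max_eq_right (by linarith), max_eq_left (by linarith), abs_of_nonpos (by linarith)]
        ring
      · rw [max_eq_left (by linarith), max_eq_right (by linarith), abs_of_nonneg (by linarith)]
        ring
    calc |lx - ly| ≤ (K:ℝ) * ((n:ℝ) ^ e1 * dist (P (ι x)) (P (ι y))) := hmain
      _ ≤ (K:ℝ) * ((n:ℝ) ^ e1 * ((n:ℝ) ^ e2 * dist x y)) := by
          refine mul_le_mul_of_nonneg_left ?_ K.coe_nonneg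
          refine mul_le_mul_of_nonneg_left ?_ (Real.rpow_nonneg hnpos.le _)
          exact hproj.trans hback
      _ = (K:ℝ) * (n:ℝ) ^ |1 / p.toReal - 1 / 2| * dist x y := by
          rw [← hsum]; ring
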